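/- Let H be a connected multigraph in which every vertex has multidegree at least 3, let G be a multigraph, and let G′ be a subdivision of G. If (φ, ψ) is an H-immersion model in G′, then no branch vertex of (φ, ψ) (i.e., no vertex in the image of φ) is a subdivision vertex, and consequently G′ contains H as an immersion if and only if G contains H as an immersion. -/

import Mathlib

open scoped Classical

/-- A finite loopless multigraph: `E` indexes edges, `ends e` gives the endpoints. -/
structure Multigraph (V : Type) (E : Type) where
  ends : E → Sym2 V
  loopless : ∀ e, ¬ (ends e).IsDiag

namespace Multigraph

variable {V E V1 E1 V2 E2 : Type}

/-- Multidegree: number of edges (with multiplicity) incident with `v`. -/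
noncomputable def mdeg (G : Multigraph V E) [Fintype E] (v : V) : ℕ :=
  (Finset.univ.filter (fun e => v ∈ G.ends e)).card

/-- Walks in a multigraph, remembering which edge instance is used at each step. -/
inductive Walk (G : Multigraph V E) : V → V → Type where
  | nil (v : V) : Walk G v v
  | cons {u v w : V} (e : E) (he : G.ends e = s(u, v)) (p : Walk G v w) : Walk G u w

namespace Walk

variable {G : Multigraph V E}

def support : {u v : V} → G.Walk u v → List V
  | u, _, .nil _ => [u]
  | u, _, .cons _ _ p => u :: p.support

def edges : {u v : V} → G.Walk u v → List E
  | _, _, .nil _ => []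
  | _, _, .cons e _ p => e :: p.edges

/-- A walk is a path when its vertices are pairwise distinct. -/
def IsPath {u v : V} (p : G.Walk u v) : Prop := p.support.Nodup

/-- The internal vertices of a walk (all vertices except the two endpoints). -/
def interior {u v : V} (p : G.Walk u v) : List V := p.support.tail.dropLast

end Walk

/-- An `H`-immersion model in `G`. -/
structure ImmersionModel (H : Multigraph V1 E1) (G : Multigraph V E) where
  vmap : V1 → V
  vmap_inj : Function.Injective vmap
  src : E1 → V1
  tgt : E1 → V1
  ends_eq : ∀ e, H.ends e = s(src e, tgt e)
  path : ∀ e, G.Walk (vmap (src e)) (vmap (tgt e))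
  path_isPath : ∀ e, (path e).IsPath
  edge_disjoint : ∀ e₁ e₂, e₁ ≠ e₂ → ∀ x, x ∈ (path e₁).edges → x ∉ (path e₂).edges

namespace ImmersionModel

variable {H : Multigraph V1 E1} {G : Multigraph V E}

/-- The edges of the immersion expansion associated with the model. -/
def edgeSet (m : ImmersionModel H G) : Set E := {x | ∃ e, x ∈ (m.path e).edges}

/-- The vertices of the immersion expansion associated with the model. -/
def vertSet (m : ImmersionModel H G) : Set V :=
  {x | (∃ a, m.vmap a = x) ∨ ∃ e, x ∈ (m.path e).support}

end ImmersionModel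

/-- `G` contains `H` as an immersion. -/
def Immersed (H : Multigraph V1 E1) (G : Multigraph V E) : Prop :=
  Nonempty (ImmersionModel H G)

/-- Deleting a set of edges from a multigraph. -/
def deleteEdges (G : Multigraph V E) (F : Set E) : Multigraph V {e : E // e ∉ F} where
  ends e := G.ends e.1
  loopless e := G.loopless e.1

/-- The minimum size of an `H`-cover of `G`: a set of edges meeting every
`H`-immersion expansion. (By convention `sInf ∅ = 0`.) -/
noncomputable def coverNum (H : Multigraph V1 E1) (G : Multigraph V E) : ℕ :=
  sInf {n | ∃ C : Finset E, ¬ Immersed H (G.deleteEdges ↑C) ∧ C.card = n}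

/-- The maximum size of an `H`-packing in `G`: a collection of pairwise
edge-disjoint `H`-immersion expansions. -/
noncomputable def packNum (H : Multigraph V1 E1) (G : Multigraph V E) : ℕ :=
  sSup {n | ∃ f : Fin n → ImmersionModel H G,
    ∀ i j, i ≠ j → Disjoint (f i).edgeSet (f j).edgeSet}

/-- Connectivity of a multigraph. -/
def Connected (G : Multigraph V E) : Prop :=
  Nonempty V ∧ ∀ u v : V, Nonempty (G.Walk u v)

/-- Reachability in `G` avoiding the vertex set `X`. -/
def ReachAvoid (G : Multigraph V E) (X : Set V) (u v : V) : Prop :=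
  ∃ p : G.Walk u v, ∀ x ∈ p.support, x ∉ X

/-- The underlying simple graph of a multigraph. -/
def toSimple (G : Multigraph V E) : SimpleGraph V where
  Adj u v := u ≠ v ∧ ∃ e, G.ends e = s(u, v)
  symm := ⟨by
    rintro u v ⟨h, e, he⟩
    exact ⟨h.symm, e, by rw [he, Sym2.eq_swap]⟩⟩
  loopless := ⟨fun v h => h.1 rfl⟩

end Multigraph

section Minor

/-- `A` is a minor of `B` (branch-set/minor-model definition). -/
def SimpleGraphMinorOf {α β : Type} (A : SimpleGraph α) (B : SimpleGraph β) : Prop :=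
  ∃ C : α → Set β,
    (∀ a, (C a).Nonempty) ∧
    (∀ a, (B.induce (C a)).Connected) ∧
    (Pairwise fun a a' => Disjoint (C a) (C a')) ∧
    (∀ a a', A.Adj a a' → ∃ x ∈ C a, ∃ y ∈ C a', B.Adj x y)

end Minor

namespace Multigraph

variable {V E : Type}

/-- Planarity of a loopless multigraph, via Wagner's theorem: no `K₅` and
no `K₃,₃` minor in the underlying simple graph. -/
def Planar (G : Multigraph V E) : Prop :=
  ¬ SimpleGraphMinorOf (SimpleGraph.completeGraph (Fin 5)) G.toSimple ∧
  ¬ SimpleGraphMinorOf (completeBipartiteGraph (Fin 3) (Fin 3)) G.toSimple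

lemma isDiag_map_inl {α β : Type} (p : Sym2 α) :
    (p.map (Sum.inl : α → α ⊕ β)).IsDiag ↔ p.IsDiag := by
  induction p using Sym2.ind with
  | _ a b => simp

/-- `G⁺`: attach to every vertex `v` a gadget of two new vertices `(v,false)`,
`(v,true)` joined by a double edge, each joined to `v` by a single edge. -/
def plus (G : Multigraph V E) :
    Multigraph (V ⊕ (V × Bool)) (E ⊕ ((V × Fin 2) ⊕ (V × Bool))) where
  ends
    | .inl e => (G.ends e).map .inl
    | .inr (.inl (v, _)) => s(.inr (v, false), .inr (v, true))
    | .inr (.inr (v, b)) => s(.inl v, .inr (v, b))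
  loopless := by
    rintro (e | ⟨v, i⟩ | ⟨v, b⟩) h
    · exact G.loopless e ((isDiag_map_inl _).1 h)
    · simp at h
    · simp at h

/-- `G*`: attach, at every vertex `v` and for every `i ∈ {1,…,mdeg v}`, a gadget of two
new vertices joined by a double edge, each joined to `v` by a single edge. -/
noncomputable def star (G : Multigraph V E) [Fintype E] :
    Multigraph (V ⊕ ((Σ v : V, Fin (G.mdeg v)) × Bool))
      (E ⊕ (((Σ v : V, Fin (G.mdeg v)) × Fin 2) ⊕ ((Σ v : V, Fin (G.mdeg v)) × Bool))) where
  ends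
    | .inl e => (G.ends e).map .inl
    | .inr (.inl (p, _)) => s(.inr (p, false), .inr (p, true))
    | .inr (.inr (p, b)) => s(.inl p.1, .inr (p, b))
  loopless := by
    rintro (e | ⟨p, i⟩ | ⟨p, b⟩) h
    · exact G.loopless e ((isDiag_map_inl _).1 h)
    · simp at h
    · simp at h

/-- The subdivision of `G` in which the edge `e` (oriented from `src e` to `tgt e`)
is subdivided `n e` times, i.e. replaced by a path with `n e` internal vertices. -/
def subdivide (G : Multigraph V E) (src tgt : E → V)
    (hst : ∀ e, G.ends e = s(src e, tgt e)) (n : E → ℕ) :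
    Multigraph (V ⊕ (Σ e : E, Fin (n e))) (Σ e : E, Fin (n e + 1)) where
  ends := fun q =>
    s(if _ : q.2.val = 0 then Sum.inl (src q.1)
        else Sum.inr ⟨q.1, ⟨q.2.val - 1, by have := q.2.isLt; omega⟩⟩,
      if _ : q.2.val = n q.1 then Sum.inl (tgt q.1)
        else Sum.inr ⟨q.1, ⟨q.2.val, by have := q.2.isLt; omega⟩⟩)
  loopless := by
    rintro ⟨e, i⟩ h
    rw [Sym2.mk_isDiag_iff] at h
    split_ifs at h with h1 h2 h2 <;>
      first
        | exact Sum.noConfusion h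
        | (have hl := G.loopless e
           rw [hst e, Sym2.mk_isDiag_iff] at hl
           exact hl (Sum.inl.inj h))
        | (have h3 := congrArg (fun s => s.2.val) (Sum.inr.inj h)
           simp only at h1 h3 <;> omega)

end Multigraph

namespace Multigraph

/-- The multigraph underlying a simple graph. -/
def ofSimple {α : Type} (S : SimpleGraph α) : Multigraph α S.edgeSet where
  ends e := e.1
  loopless e := S.not_isDiag_of_mem_edgeSet e.2

/-- A strong immersion model: additionally, no branch vertex is an internal
vertex of a certifying path. -/
structure StrongImmersionModel {V1 E1 V E : Type} (H : Multigraph V1 E1) (G : Multigraph V E)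
    extends ImmersionModel H G where
  not_internal : ∀ (e : E1) (x : V1), vmap x ∉ (path e).interior

/-- An `H`-topological-minor model in `G`: certifying paths are internally
vertex-disjoint and their internal vertices avoid the branch vertices. -/
structure TopMinorModel {V1 E1 V E : Type} (H : Multigraph V1 E1) (G : Multigraph V E) where
  vmap : V1 → V
  vmap_inj : Function.Injective vmap
  src : E1 → V1
  tgt : E1 → V1
  ends_eq : ∀ e, H.ends e = s(src e, tgt e)
  path : ∀ e, G.Walk (vmap (src e)) (vmap (tgt e))
  path_isPath : ∀ e, (path e).IsPath
  internal_disjoint : ∀ e₁ e₂, e₁ ≠ e₂ → ∀ x, x ∈ (path e₁).interior → x ∉ (path e₂).support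
  internal_avoid : ∀ (e : E1) (x : V1), vmap x ∉ (path e).interior

end Multigraph

section Walls

/-- The `m × n` grid graph. -/
def gridGraph (m n : ℕ) : SimpleGraph (Fin m × Fin n) where
  Adj p q := (p.1 = q.1 ∧ (p.2.val + 1 = q.2.val ∨ q.2.val + 1 = p.2.val)) ∨
             (p.2 = q.2 ∧ (p.1.val + 1 = q.1.val ∨ q.1.val + 1 = p.1.val))
  symm := ⟨by rintro p q (⟨h, h'⟩ | ⟨h, h'⟩) <;> [left; right] <;> exact ⟨h.symm, h'.symm⟩⟩
  loopless := ⟨by rintro p (⟨-, h | h⟩ | ⟨-, h | h⟩) <;> omega⟩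

/-- The `k×k` grid `Γ_k` as a multigraph. -/
def Gamma (k : ℕ) : Multigraph (Fin k × Fin k) (gridGraph k k).edgeSet :=
  Multigraph.ofSimple (gridGraph k k)

/-- The `(k+1) × (2k+2)` grid with the vertical edges `{(x,y),(x+1,y)}` with `x+y` odd
(in 1-indexed coordinates) removed. -/
def wallPre (k : ℕ) : SimpleGraph (Fin (k + 1) × Fin (2 * k + 2)) where
  Adj p q := (gridGraph (k + 1) (2 * k + 2)).Adj p q ∧
    ¬ (p.2 = q.2 ∧ (min p.1.val q.1.val + p.2.val) % 2 = 1)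
  symm := ⟨by
    rintro p q ⟨h, h'⟩
    refine ⟨(gridGraph _ _).symm.symm _ _ h, fun ⟨hc, hp⟩ => h' ⟨hc.symm, ?_⟩⟩
    rw [Nat.min_comm] at hp
    rw [← hc]
    exact hp⟩
  loopless := ⟨fun p h => (gridGraph _ _).loopless.irrefl p h.1⟩

/-- Degree of a vertex in `wallPre k`. -/
noncomputable def wallPreDeg (k : ℕ) (v : Fin (k + 1) × Fin (2 * k + 2)) : ℕ :=
  (Finset.univ.filter (fun w => (wallPre k).Adj v w)).card

/-- The vertex set of the `k`-wall: vertices of degree `≠ 1`. -/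
def wallVerts (k : ℕ) : Set (Fin (k + 1) × Fin (2 * k + 2)) :=
  {v | wallPreDeg k v ≠ 1}

/-- The `k`-wall `W_k`, as a simple graph. -/
noncomputable def wallSimple (k : ℕ) : SimpleGraph (wallVerts k) :=
  (wallPre k).induce (wallVerts k)

/-- The `k`-wall `W_k`, as a multigraph. -/
noncomputable def Wall (k : ℕ) : Multigraph (wallVerts k) (wallSimple k).edgeSet :=
  Multigraph.ofSimple (wallSimple k)

/-- The doubled edges of `W⁺_k`: the horizontal edges lying on both a vertical and a
horizontal path of the wall, i.e. those whose lower column index is odd (1-indexed). -/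
def isDoubledEdge (k : ℕ) (p : Sym2 (wallVerts k)) : Prop :=
  ∃ a b : wallVerts k, p = s(a, b) ∧ (a : Fin (k + 1) × Fin (2 * k + 2)).1 = (b : Fin (k + 1) × Fin (2 * k + 2)).1 ∧
    (b : Fin (k + 1) × Fin (2 * k + 2)).2.val = (a : Fin (k + 1) × Fin (2 * k + 2)).2.val + 1 ∧
    (a : Fin (k + 1) × Fin (2 * k + 2)).2.val % 2 = 0

/-- `W⁺_k`: the `k`-wall with a second parallel copy of every doubled edge. -/
noncomputable def WallPlus (k : ℕ) :
    Multigraph (wallVerts k)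
      ((wallSimple k).edgeSet ⊕ {p : Sym2 (wallVerts k) // p ∈ (wallSimple k).edgeSet ∧ isDoubledEdge k p}) where
  ends
    | .inl e => e.1
    | .inr e => e.1
  loopless := by
    rintro (e | e)
    · exact (wallSimple k).not_isDiag_of_mem_edgeSet e.2
    · exact (wallSimple k).not_isDiag_of_mem_edgeSet e.2.1

end Walls

namespace Multigraph

variable {V E : Type}

/-- Tree-partition width of a multigraph (bags may be empty; w.l.o.g. bags are
indexed by the vertices themselves). -/
noncomputable def tpw (G : Multigraph V E) [Fintype V] [Fintype E] : ℕ :=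
  sInf {w | ∃ T : SimpleGraph V, T.IsTree ∧ ∃ bag : V → V,
    (Fintype.card V = 1 ∨
      ∀ (e : E) (a b : V), G.ends e = s(a, b) → bag a = bag b ∨ T.Adj (bag a) (bag b)) ∧
    (∀ t : V, (Finset.univ.filter (fun v => bag v = t)).card ≤ w) ∧
    (∀ t t' : V, T.Adj t t' →
      (Finset.univ.filter (fun e : E =>
        ∃ a b, G.ends e = s(a, b) ∧ bag a = t ∧ bag b = t')).card ≤ w)}

section ThreeCenter

variable {W : Type} [Fintype W]

/-- Degree of `v` in the state `(A, m)`: `A` is the set of remaining vertices and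
`m` gives edge multiplicities. -/
noncomputable def stDeg (A : Finset W) (m : Sym2 W → ℕ) (v : W) : ℕ :=
  ∑ w ∈ A.erase v, m s(v, w)

/-- One reduction step of the 3-center construction relative to the marked set `X`:
delete a vertex of degree one, or suppress (dissolve) a vertex of degree two not in `X`. -/
inductive CStep (X : Set W) :
    Finset W × (Sym2 W → ℕ) → Finset W × (Sym2 W → ℕ) → Prop
  | delete (A : Finset W) (m : Sym2 W → ℕ) (v : W) (hv : v ∈ A) (hd : stDeg A m v = 1) :
      CStep X (A, m) (A.erase v, fun p => if v ∈ p then 0 else m p)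
  | suppress (A : Finset W) (m : Sym2 W → ℕ) (v a b : W) (hv : v ∈ A) (hx : v ∉ X)
      (ha : a ∈ A) (hb : b ∈ A) (hav : a ≠ v) (hbv : b ≠ v) (hd : stDeg A m v = 2)
      (h1 : 1 ≤ m s(v, a)) (h2 : a = b → m s(v, a) = 2) (h3 : a ≠ b → 1 ≤ m s(v, b)) :
      CStep X (A, m) (A.erase v,
        fun p => if v ∈ p then 0 else if a ≠ b ∧ p = s(a, b) then m p + 1 else m p)

/-- The number of vertices of the 3-center of the marked multigraph given by the
state `(A, m)` with marked set `X`: the size of a reduct on which no step applies. -/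
noncomputable def centerSize (X : Set W) (A : Finset W) (m : Sym2 W → ℕ) : ℕ :=
  sInf {c | ∃ s : Finset W × (Sym2 W → ℕ),
    Relation.ReflTransGen (CStep X) (A, m) s ∧ (∀ s', ¬ CStep X s s') ∧ s.1.card = c}

end ThreeCenter

section TCW

variable {n : ℕ}

/-- The consolidation map for the torso at node `t` of a tree-cut decomposition:
a vertex whose bag is `t` is kept, and any other vertex is sent to the peripheral
vertex indexed by the neighbour `u` of `t` whose branch contains its bag. -/
noncomputable def consMap (T : SimpleGraph (Fin n)) (bag : V → Fin n) (t : Fin n) (a : V) :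
    V ⊕ Fin n :=
  if bag a = t then Sum.inl a
  else if h : ∃ u, T.Adj t u ∧ (T.deleteEdges {s(t, u)}).Reachable (bag a) u
    then Sum.inr h.choose else Sum.inl a

/-- The vertex set of the torso at `t`: the bag of `t` together with one peripheral
vertex for each neighbour of `t` in the decomposition tree. -/
noncomputable def torsoA [Fintype V] (T : SimpleGraph (Fin n)) (bag : V → Fin n) (t : Fin n) :
    Finset (V ⊕ Fin n) :=
  (Finset.univ.filter (fun a : V => bag a = t)).image Sum.inl ∪
    (Finset.univ.filter (fun u : Fin n => T.Adj t u)).image Sum.inr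

/-- The edge multiplicities of the torso at `t`. -/
noncomputable def torsoM (G : Multigraph V E) [Fintype E] (T : SimpleGraph (Fin n))
    (bag : V → Fin n) (t : Fin n) : Sym2 (V ⊕ Fin n) → ℕ :=
  fun p => if p.IsDiag then 0
    else (Finset.univ.filter (fun e : E => (G.ends e).map (consMap T bag t) = p)).card

/-- The adhesion of the tree edge `{t, t'}`: the number of edges of `G` whose endpoints
lie in bags on different sides of the edge. -/
noncomputable def adhE (G : Multigraph V E) [Fintype E] (T : SimpleGraph (Fin n))
    (bag : V → Fin n) (t t' : Fin n) : ℕ :=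
  (Finset.univ.filter (fun e : E => ∃ a b, G.ends e = s(a, b) ∧
    (T.deleteEdges {s(t, t')}).Reachable (bag a) t ∧
    (T.deleteEdges {s(t, t')}).Reachable (bag b) t')).card

/-- Tree-cut width of a multigraph: the minimum, over tree-cut decompositions, of
the maximum of all adhesions and of the numbers of vertices of the 3-centers
of the torsos. -/
noncomputable def tcw (G : Multigraph V E) [Fintype V] [Fintype E] : ℕ :=
  sInf {w | ∃ (n : ℕ) (T : SimpleGraph (Fin n)), T.IsTree ∧ ∃ bag : V → Fin n,
    (∀ t t', T.Adj t t' → adhE G T bag t t' ≤ w) ∧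
    (∀ t, centerSize (Sum.inl '' {a | bag a = t}) (torsoA T bag t) (torsoM G T bag t) ≤ w)}

end TCW

end Multigraph


section Aux

namespace Multigraph
namespace Walk

variable {V E : Type} {G : Multigraph V E} {u v w : V}

lemma start_mem_support (p : G.Walk u v) : u ∈ p.support := by
  cases p <;> simp [support]

lemma end_mem_support (p : G.Walk u v) : v ∈ p.support := by
  induction p with
  | nil => simp [support]
  | cons e he p ih => simp [support, ih]

lemma mem_support_of_mem_ends {x : E} (p : G.Walk u v) (hx : x ∈ p.edges)
    {y : V} (hy : y ∈ G.ends x) : y ∈ p.support := by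
  induction p with
  | nil => simp [edges] at hx
  | cons e he p ih =>
    simp only [edges, List.mem_cons] at hx
    rcases hx with rfl | hx
    · rw [he] at hy
      rcases Sym2.mem_iff.1 hy with rfl | rfl
      · simp [support]
      · simp [support, start_mem_support]
    · simp [support, ih hx]

lemma exists_first_edge (p : G.Walk u v) (h : u ≠ v) :
    ∃ q ∈ p.edges, u ∈ G.ends q := by
  cases p with
  | nil => exact absurd rfl h
  | cons e he p => exact ⟨e, by simp [edges], by simp [he]⟩

lemma exists_last_edge (p : G.Walk u v) (h : u ≠ v) :
    ∃ q ∈ p.edges, v ∈ G.ends q := by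
  induction p with
  | nil => exact absurd rfl h
  | cons e he p ih =>
    rename_i u' v' w'
    by_cases hvw : v' = w'
    · subst hvw
      exact ⟨e, by simp [edges], by simp [he]⟩
    · obtain ⟨q, hq1, hq2⟩ := ih hvw
      exact ⟨q, by simp [edges, hq1], hq2⟩

lemma edges_nodup (p : G.Walk u v) (h : p.support.Nodup) : p.edges.Nodup := by
  induction p with
  | nil => simp [edges]
  | cons e he p ih =>
    simp only [support, List.nodup_cons] at h
    simp only [edges, List.nodup_cons]
    refine ⟨fun hmem => h.1 ?_, ih h.2⟩
    exact p.mem_support_of_mem_ends hmem (by simp [he])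

def copy (p : G.Walk u v) {u' v' : V} (hu : u = u') (hv : v = v') : G.Walk u' v' :=
  hu ▸ hv ▸ p

@[simp] lemma support_copy (p : G.Walk u v) {u' v' : V} (hu : u = u') (hv : v = v') :
    (p.copy hu hv).support = p.support := by subst hu; subst hv; rfl

@[simp] lemma edges_copy (p : G.Walk u v) {u' v' : V} (hu : u = u') (hv : v = v') :
    (p.copy hu hv).edges = p.edges := by subst hu; subst hv; rfl

def append : {u v w : V} → G.Walk u v → G.Walk v w → G.Walk u w
  | _, _, _, .nil _, q => q
  | _, _, _, .cons e he p, q => .cons e he (p.append q)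

@[simp] lemma support_append (p : G.Walk u v) (q : G.Walk v w) :
    (p.append q).support = p.support.dropLast ++ q.support := by
  induction p with
  | nil => simp [append, support]
  | cons e he p ih =>
    have hne : p.support ≠ [] := by cases p <;> simp [support]
    simp [append, support, ih, List.dropLast_cons_of_ne_nil hne]

lemma support_dropLast_concat (p : G.Walk u v) : p.support.dropLast ++ [v] = p.support := by
  induction p with
  | nil => simp [support]
  | cons e he p ih =>
    have hne : p.support ≠ [] := by cases p <;> simp [support]
    simp [support, List.dropLast_cons_of_ne_nil hne, ih]

@[simp] lemma edges_append (p : G.Walk u v) (q : G.Walk v w) :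
    (p.append q).edges = p.edges ++ q.edges := by
  induction p with
  | nil => simp [append, edges]
  | cons e he p ih => simp [append, edges, ih]

def reverse : {u v : V} → G.Walk u v → G.Walk v u
  | _, _, .nil v => .nil v
  | _, _, .cons e he p => p.reverse.append (.cons e (by rw [he, Sym2.eq_swap]) (.nil _))

@[simp] lemma support_reverse (p : G.Walk u v) : p.reverse.support = p.support.reverse := by
  induction p with
  | nil => simp [reverse, support]
  | cons e he p ih =>
    have hcons : ∀ {a b : V} (q : G.Walk a b), q.support = a :: q.support.tail := by
      intro a b q; cases q <;> rfl
    simp [reverse, support, ih]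
    rw [hcons p]
    simp

@[simp] lemma edges_reverse (p : G.Walk u v) : p.reverse.edges = p.edges.reverse := by
  induction p with
  | nil => simp [reverse, edges]
  | cons e he p ih => simp [reverse, edges, ih]

end Walk
end Multigraph

end Aux


section Subdiv

namespace Multigraph

lemma support_eq_cons' {V E : Type} {G : Multigraph V E} {u v : V} (p : G.Walk u v) :
    p.support = u :: p.support.tail := by cases p <;> rfl

variable {V E : Type} (src tgt : E → V) (n : E → ℕ)

/-- Position `k` along the subdivided edge `e`. -/
def spos (e : E) (k : ℕ) : V ⊕ (Σ e : E, Fin (n e)) :=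
  if _ : k = 0 then Sum.inl (src e)
  else if h2 : k ≤ n e then Sum.inr ⟨e, ⟨k - 1, by omega⟩⟩
  else Sum.inl (tgt e)

lemma spos_zero (e : E) : spos src tgt n e 0 = Sum.inl (src e) := by simp [spos]

lemma spos_last (e : E) {k : ℕ} (h : n e < k) : spos src tgt n e k = Sum.inl (tgt e) := by
  simp only [spos]
  rw [dif_neg (by omega), dif_neg (by omega)]

lemma spos_mid (e : E) {k : ℕ} (h1 : 1 ≤ k) (h2 : k ≤ n e) :
    spos src tgt n e k = Sum.inr ⟨e, ⟨k - 1, by omega⟩⟩ := by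
  simp only [spos]
  rw [dif_neg (by omega), dif_pos h2]

lemma src_ne_tgt {G : Multigraph V E} (hst : ∀ e, G.ends e = s(src e, tgt e)) (e : E) :
    src e ≠ tgt e := by
  intro h
  exact G.loopless e (by rw [hst e, Sym2.mk_isDiag_iff]; exact h)

lemma subdivide_ends {G : Multigraph V E} (hst : ∀ e, G.ends e = s(src e, tgt e))
    (e : E) (j : Fin (n e + 1)) :
    (G.subdivide src tgt hst n).ends ⟨e, j⟩ =
      s(spos src tgt n e j.val, spos src tgt n e (j.val + 1)) := by
  have hj := j.isLt
  show s(_, _) = s(_, _)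
  have h1 : (if _ : (j : ℕ) = 0 then (Sum.inl (src e) : V ⊕ (Σ e : E, Fin (n e)))
      else Sum.inr ⟨e, ⟨(j : ℕ) - 1, by omega⟩⟩) = spos src tgt n e j.val := by
    by_cases h : (j : ℕ) = 0
    · rw [dif_pos h, h, spos_zero]
    · rw [dif_neg h, spos_mid src tgt n e (by omega) (by omega)]
  have h2 : (if _ : (j : ℕ) = n e then (Sum.inl (tgt e) : V ⊕ (Σ e : E, Fin (n e)))
      else Sum.inr ⟨e, ⟨(j : ℕ), by omega⟩⟩) = spos src tgt n e ((j : ℕ) + 1) := by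
    by_cases h : (j : ℕ) = n e
    · rw [dif_pos h, spos_last src tgt n e (by omega)]
    · rw [dif_neg h, spos_mid src tgt n e (by omega) (by omega)]
      simp
  show s(dite _ _ _, dite _ _ _) = _
  rw [h1, h2]

lemma spos_inj {G : Multigraph V E} (hst : ∀ e, G.ends e = s(src e, tgt e))
    (e : E) {k l : ℕ} (hk : k ≤ n e + 1) (hl : l ≤ n e + 1)
    (h : spos src tgt n e k = spos src tgt n e l) : k = l := by
  have hne := src_ne_tgt src tgt hst e
  simp only [spos] at h
  split_ifs at h <;>
    first
      | omega
      | (exact absurd (Sum.inl.inj h) hne)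
      | (exact absurd (Sum.inl.inj h).symm hne)
      | exact Sum.noConfusion h
      | (have h2 := congrArg (fun x : V ⊕ (Σ e : E, Fin (n e)) =>
            match x with | Sum.inr y => (y.2 : ℕ) | Sum.inl _ => 0) h
         simp only at h2
         omega)

lemma spos_eq_inr {e e' : E} {i : Fin (n e)} {k : ℕ}
    (hk : Sum.inr ⟨e, i⟩ = spos src tgt n e' k) : e' = e ∧ k = (i : ℕ) + 1 := by
  simp only [spos] at hk
  split_ifs at hk with h1 h2
  have h3 := Sum.inr.inj hk
  obtain ⟨he, hi⟩ := Sigma.mk.inj_iff.1 h3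
  subst he
  have h4 : i = ⟨k - 1, by omega⟩ := eq_of_heq hi
  have h5 := congrArg Fin.val h4
  simp only at h5
  exact ⟨rfl, by omega⟩

lemma spos_eq_inl {e : E} {a : V} {k : ℕ} (hk : k ≤ n e + 1)
    (h : Sum.inl a = spos src tgt n e k) :
    (k = 0 ∧ a = src e) ∨ (k = n e + 1 ∧ a = tgt e) := by
  simp only [spos] at h
  split_ifs at h with h1 h2
  · exact Or.inl ⟨h1, Sum.inl.inj h⟩
  · exact Or.inr ⟨by omega, Sum.inl.inj h⟩

lemma inr_mem_ends {G : Multigraph V E} (hst : ∀ e, G.ends e = s(src e, tgt e))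
    {e : E} {i : Fin (n e)} {x : Σ e : E, Fin (n e + 1)}
    (h : Sum.inr ⟨e, i⟩ ∈ (G.subdivide src tgt hst n).ends x) :
    x.1 = e ∧ ((x.2 : ℕ) = (i : ℕ) ∨ (x.2 : ℕ) = (i : ℕ) + 1) := by
  obtain ⟨e', j⟩ := x
  show e' = e ∧ ((j : ℕ) = (i : ℕ) ∨ (j : ℕ) = (i : ℕ) + 1)
  rw [subdivide_ends src tgt n hst, Sym2.mem_iff] at h
  rcases h with h | h
  · obtain ⟨he, hk⟩ := spos_eq_inr src tgt n h
    subst he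
    exact ⟨rfl, Or.inr hk⟩
  · obtain ⟨he, hk⟩ := spos_eq_inr src tgt n h
    subst he
    exact ⟨rfl, Or.inl (by omega)⟩

lemma inl_mem_ends {G : Multigraph V E} (hst : ∀ e, G.ends e = s(src e, tgt e))
    {a : V} {x : Σ e : E, Fin (n e + 1)}
    (h : Sum.inl a ∈ (G.subdivide src tgt hst n).ends x) :
    ((x.2 : ℕ) = 0 ∧ a = src x.1) ∨ ((x.2 : ℕ) = n x.1 ∧ a = tgt x.1) := by
  obtain ⟨e', j⟩ := x
  show ((j : ℕ) = 0 ∧ a = src e') ∨ ((j : ℕ) = n e' ∧ a = tgt e')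
  have hj := j.isLt
  rw [subdivide_ends src tgt n hst, Sym2.mem_iff] at h
  rcases h with h | h
  · rcases spos_eq_inl src tgt n (by omega) h with ⟨h1, h2⟩ | ⟨h1, h2⟩
    · exact Or.inl ⟨h1, h2⟩
    · omega
  · rcases spos_eq_inl src tgt n (by omega) h with ⟨h1, h2⟩ | ⟨h1, h2⟩
    · omega
    · exact Or.inr ⟨by omega, h2⟩

variable {G : Multigraph V E} (hst : ∀ e, G.ends e = s(src e, tgt e))

/-- The full traversal of subdivided edge `e` from position `k` to `Sum.inl (tgt e)`. -/
def seg (e : E) (k : ℕ) (hk : k ≤ n e + 1) :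
    (G.subdivide src tgt hst n).Walk (spos src tgt n e k) (Sum.inl (tgt e)) :=
  if h : k = n e + 1 then
    (Multigraph.Walk.nil (Sum.inl (tgt e))).copy
      ((h ▸ spos_last src tgt n e (by omega) : spos src tgt n e k = Sum.inl (tgt e))).symm rfl
  else
    Multigraph.Walk.cons ⟨e, ⟨k, by omega⟩⟩ (subdivide_ends src tgt n hst e ⟨k, by omega⟩)
      (seg e (k + 1) (by omega))
termination_by n e + 1 - k

lemma seg_support (e : E) (k : ℕ) (hk : k ≤ n e + 1) :
    (seg src tgt n hst e k hk).support
      = (List.range' k (n e + 2 - k)).map (spos src tgt n e) := by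
  rw [seg]
  split_ifs with h
  · subst h
    have h2 : n e + 2 - (n e + 1) = 1 := by omega
    rw [h2]
    simp only [Multigraph.Walk.support_copy, Multigraph.Walk.support, List.range',
      List.map_cons, List.map_nil]
    rw [spos_last src tgt n e (by omega)]
  · have h2 : n e + 2 - k = (n e + 2 - (k + 1)) + 1 := by omega
    rw [h2, List.range'_succ]
    simp only [Multigraph.Walk.support, List.map_cons]
    rw [seg_support e (k + 1) (by omega)]
termination_by n e + 1 - k

lemma seg_edges (e : E) (k : ℕ) (hk : k ≤ n e + 1) (e' : E) (j : Fin (n e' + 1)) :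
    (⟨e', j⟩ : Σ e : E, Fin (n e + 1)) ∈ (seg src tgt n hst e k hk).edges ↔
      e' = e ∧ k ≤ (j : ℕ) := by
  rw [seg]
  split_ifs with h
  · subst h
    simp only [Multigraph.Walk.edges_copy, Multigraph.Walk.edges, List.not_mem_nil, false_iff]
    rintro ⟨rfl, h2⟩
    have := j.isLt
    omega
  · simp only [Multigraph.Walk.edges, List.mem_cons]
    rw [seg_edges e (k + 1) (by omega) e' j]
    constructor
    · rintro (h1 | ⟨rfl, h2⟩)
      · obtain ⟨rfl, h2⟩ := Sigma.mk.inj_iff.1 h1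
        exact ⟨rfl, by rw [eq_of_heq h2]⟩
      · exact ⟨rfl, by omega⟩
    · rintro ⟨rfl, h2⟩
      by_cases hj : (j : ℕ) = k
      · exact Or.inl (by rw [Sigma.mk.inj_iff]; exact ⟨rfl, heq_of_eq (Fin.ext hj)⟩)
      · exact Or.inr ⟨rfl, by omega⟩
termination_by n e + 1 - k

end Multigraph

end Subdiv


section MainAux

namespace Multigraph

variable {V E : Type} {src tgt : E → V} {n : E → ℕ} {G : Multigraph V E}
  {hst : ∀ e, G.ends e = s(src e, tgt e)}

lemma sigma_fin_ext {q r : Σ e : E, Fin (n e + 1)} (h1 : q.1 = r.1)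
    (h2 : (q.2 : ℕ) = (r.2 : ℕ)) : q = r := by
  obtain ⟨a, b⟩ := q
  obtain ⟨c, d⟩ := r
  dsimp only at h1
  subst h1
  dsimp only at h2
  rw [Sigma.mk.inj_iff]
  exact ⟨rfl, heq_of_eq (Fin.ext h2)⟩

lemma branch_inl {V1 E1 : Type} [Fintype E1]
    (H : Multigraph V1 E1) (hdeg : ∀ x, 3 ≤ H.mdeg x)
    (m : Multigraph.ImmersionModel H (G.subdivide src tgt hst n)) (x : V1) :
    ∃ a : V, m.vmap x = Sum.inl a := by
  rcases hv : m.vmap x with a | y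
  · exact ⟨a, rfl⟩
  obtain ⟨e, i⟩ := y
  exfalso
  have key : ∀ f : E1, x ∈ H.ends f →
      ∃ q, q ∈ (m.path f).edges ∧ m.vmap x ∈ (G.subdivide src tgt hst n).ends q := by
    intro f hf
    have hends := m.ends_eq f
    have hne : m.src f ≠ m.tgt f := by
      intro h
      exact H.loopless f (by rw [hends, Sym2.mk_isDiag_iff]; exact h)
    have hvne : m.vmap (m.src f) ≠ m.vmap (m.tgt f) := fun h => hne (m.vmap_inj h)
    rw [hends, Sym2.mem_iff] at hf
    rcases hf with rfl | rfl
    · exact (m.path f).exists_first_edge hvne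
    · exact (m.path f).exists_last_edge hvne
  set S : Finset E1 := Finset.univ.filter (fun f => x ∈ H.ends f) with hS
  have hcard : 3 ≤ S.card := hdeg x
  let g : E1 → Σ e : E, Fin (n e + 1) := fun f =>
    if h : ∃ q, q ∈ (m.path f).edges ∧ m.vmap x ∈ (G.subdivide src tgt hst n).ends q
    then h.choose else ⟨e, i.succ⟩
  have hg : ∀ f ∈ S, g f ∈ (m.path f).edges ∧
      m.vmap x ∈ (G.subdivide src tgt hst n).ends (g f) := by
    intro f hf
    have h := key f (by simpa [hS] using hf)
    simp only [g, dif_pos h]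
    exact h.choose_spec
  have hinj : Set.InjOn g S := by
    intro f1 h1 f2 h2 heq
    by_contra hne
    exact m.edge_disjoint f1 f2 hne (g f1) (hg f1 h1).1 (heq ▸ (hg f2 h2).1)
  have hsub : S.image g ⊆ {⟨e, i.castSucc⟩, ⟨e, i.succ⟩} := by
    intro q hq
    simp only [Finset.mem_image] at hq
    obtain ⟨f, hf, rfl⟩ := hq
    have h2 := (hg f hf).2
    rw [hv] at h2
    obtain ⟨h3, h4⟩ := Multigraph.inr_mem_ends src tgt n hst h2
    simp only [Finset.mem_insert, Finset.mem_singleton]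
    rcases h4 with h4 | h4
    · exact Or.inl (sigma_fin_ext h3 (by simpa using h4))
    · exact Or.inr (sigma_fin_ext h3 (by simpa using h4))
  have h5 : S.card = (S.image g).card := (Finset.card_image_of_injOn hinj).symm
  have h6 : (S.image g).card ≤ 2 :=
    (Finset.card_le_card hsub).trans ((Finset.card_insert_le _ _).trans (by simp))
  omega

lemma exists_segFull (e : E) (u v : V) (huv : G.ends e = s(u, v)) :
    ∃ p : (G.subdivide src tgt hst n).Walk (Sum.inl u) (Sum.inl v),
      p.support.Nodup ∧
      (∀ w, w ∈ p.support ↔ w = Sum.inl u ∨ w = Sum.inl v ∨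
        ∃ i : Fin (n e), w = Sum.inr ⟨e, i⟩) ∧
      (∀ x : Σ e : E, Fin (n e + 1), x ∈ p.edges ↔ x.1 = e) := by
  -- first, the canonical orientation
  have main : ∃ p : (G.subdivide src tgt hst n).Walk (Sum.inl (src e)) (Sum.inl (tgt e)),
      p.support.Nodup ∧
      (∀ w, w ∈ p.support ↔ w = Sum.inl (src e) ∨ w = Sum.inl (tgt e) ∨
        ∃ i : Fin (n e), w = Sum.inr ⟨e, i⟩) ∧
      (∀ x : Σ e : E, Fin (n e + 1), x ∈ p.edges ↔ x.1 = e) := by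
    refine ⟨(seg src tgt n hst e 0 (by omega)).copy (spos_zero src tgt n e) rfl, ?_, ?_, ?_⟩
    · rw [Multigraph.Walk.support_copy, seg_support]
      refine (List.nodup_range' (h := Nat.one_pos)).map_on ?_
      intro k hk l hl h
      rw [List.mem_range'_1] at hk hl
      exact spos_inj src tgt n hst e (by omega) (by omega) h
    · intro w
      rw [Multigraph.Walk.support_copy, seg_support, List.mem_map]
      constructor
      · rintro ⟨k, hk, rfl⟩
        rw [List.mem_range'_1] at hk
        rcases Nat.eq_zero_or_pos k with rfl | hk0
        · exact Or.inl (spos_zero src tgt n e)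
        · rcases Nat.lt_or_ge k (n e + 1) with hk1 | hk1
          · exact Or.inr (Or.inr ⟨⟨k - 1, by omega⟩, spos_mid src tgt n e hk0 (by omega)⟩)
          · exact Or.inr (Or.inl (spos_last src tgt n e (by omega)))
      · rintro (rfl | rfl | ⟨i, rfl⟩)
        · exact ⟨0, by rw [List.mem_range'_1]; omega, spos_zero src tgt n e⟩
        · exact ⟨n e + 1, by rw [List.mem_range'_1]; omega,
            spos_last src tgt n e (by omega)⟩
        · refine ⟨(i : ℕ) + 1, by rw [List.mem_range'_1]; have := i.isLt; omega, ?_⟩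
          rw [spos_mid src tgt n e (by omega) (by have := i.isLt; omega)]
          simp
    · intro x
      obtain ⟨e', j⟩ := x
      rw [Multigraph.Walk.edges_copy]
      show _ ↔ e' = e
      rw [seg_edges src tgt n hst e 0 (by omega) e' j]
      simp
  obtain ⟨p0, h1, h2, h3⟩ := main
  have hsym : s(src e, tgt e) = s(u, v) := (hst e).symm.trans huv
  rw [Sym2.eq_iff] at hsym
  rcases hsym with ⟨hu, hv⟩ | ⟨hu, hv⟩
  · subst hu; subst hv
    exact ⟨p0, h1, h2, h3⟩
  · subst hu; subst hv
    refine ⟨p0.reverse, ?_, ?_, ?_⟩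
    · rw [Multigraph.Walk.support_reverse]
      exact List.nodup_reverse.mpr h1
    · intro w
      rw [Multigraph.Walk.support_reverse, List.mem_reverse, h2 w]
      tauto
    · intro x
      rw [Multigraph.Walk.edges_reverse, List.mem_reverse, h3 x]

lemma lift_walk : ∀ {a b : V} (q : G.Walk a b), q.support.Nodup →
    ∃ p : (G.subdivide src tgt hst n).Walk (Sum.inl a) (Sum.inl b),
      p.support.Nodup ∧
      (∀ w, w ∈ p.support ↔ (∃ c ∈ q.support, w = Sum.inl c) ∨
        ∃ e ∈ q.edges, ∃ i : Fin (n e), w = Sum.inr ⟨e, i⟩) ∧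
      (∀ x : Σ e : E, Fin (n e + 1), x ∈ p.edges → x.1 ∈ q.edges) := by
  intro a b q
  induction q with
  | nil c =>
    intro _
    refine ⟨.nil _, by simp [Multigraph.Walk.support], ?_, by simp [Multigraph.Walk.edges]⟩
    intro w
    simp [Multigraph.Walk.support, Multigraph.Walk.edges]
  | cons e he q ih =>
    rename_i u v' w'
    intro hnd
    rw [Multigraph.Walk.support, List.nodup_cons] at hnd
    obtain ⟨hu, hnd'⟩ := hnd
    have huv' : u ≠ v' := by
      intro h
      exact G.loopless e (by rw [he, Sym2.mk_isDiag_iff]; exact h)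
    have he' : e ∉ q.edges := by
      intro h
      exact hu (q.mem_support_of_mem_ends h (by rw [he]; simp))
    obtain ⟨p', hp1, hp2, hp3⟩ := ih hnd'
    obtain ⟨s, hs1, hs2, hs3⟩ := exists_segFull (hst := hst) (n := n) e u v' he
    have hconcat : s.support.dropLast ++ [Sum.inl v'] = s.support :=
      s.support_dropLast_concat
    have hvlast : (Sum.inl v' : V ⊕ (Σ e : E, Fin (n e))) ∉ s.support.dropLast := by
      intro hmem
      have := hs1
      rw [← hconcat] at this
      exact (List.disjoint_of_nodup_append this) hmem (by simp)
    have hdropmem : ∀ w, w ∈ s.support.dropLast ↔ w ∈ s.support ∧ w ≠ Sum.inl v' := by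
      intro w
      constructor
      · intro hmem
        exact ⟨by rw [← hconcat]; exact List.mem_append_left _ hmem,
          fun h => hvlast (h ▸ hmem)⟩
      · rintro ⟨hmem, hne⟩
        rw [← hconcat, List.mem_append] at hmem
        rcases hmem with hmem | hmem
        · exact hmem
        · simp at hmem; exact absurd hmem hne
    refine ⟨s.append p', ?_, ?_, ?_⟩
    · rw [Multigraph.Walk.support_append]
      refine List.Nodup.append ?_ hp1 ?_
      · exact List.Sublist.nodup (List.dropLast_sublist _) hs1
      · intro w hw1 hw2
        rw [hdropmem] at hw1
        obtain ⟨hw1, hwne⟩ := hw1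
        rw [hs2] at hw1
        rcases hw1 with rfl | rfl | ⟨i, rfl⟩
        · rw [hp2] at hw2
          rcases hw2 with ⟨c, hc, hcc⟩ | ⟨e2, _, i2, hcc⟩
          · exact hu (by rw [Sum.inl.inj hcc]; exact hc)
          · exact Sum.inl_ne_inr hcc
        · exact hwne rfl
        · rw [hp2] at hw2
          rcases hw2 with ⟨c, _, hcc⟩ | ⟨e2, he2, i2, hcc⟩
          · exact Sum.inr_ne_inl hcc
          · obtain ⟨h6, -⟩ := Sigma.mk.inj_iff.1 (Sum.inr.inj hcc)
            exact he' (h6 ▸ he2)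
    · intro w
      rw [Multigraph.Walk.support_append, List.mem_append]
      constructor
      · rintro (hw | hw)
        · rw [hdropmem, hs2] at hw
          obtain ⟨hw, hwne⟩ := hw
          rcases hw with rfl | rfl | ⟨i, rfl⟩
          · exact Or.inl ⟨u, by simp [Multigraph.Walk.support], rfl⟩
          · exact absurd rfl hwne
          · exact Or.inr ⟨e, by simp [Multigraph.Walk.edges], i, rfl⟩
        · rw [hp2] at hw
          rcases hw with ⟨c, hc, rfl⟩ | ⟨e2, he2, i2, rfl⟩
          · exact Or.inl ⟨c, by simp [Multigraph.Walk.support, hc], rfl⟩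
          · exact Or.inr ⟨e2, by simp [Multigraph.Walk.edges, he2], i2, rfl⟩
      · rintro (⟨c, hc, rfl⟩ | ⟨e2, he2, i2, rfl⟩)
        · rw [Multigraph.Walk.support, List.mem_cons] at hc
          rcases hc with rfl | hc
          · refine Or.inl ?_
            rw [hdropmem, hs2]
            exact ⟨Or.inl rfl, fun h => huv' (Sum.inl.inj h)⟩
          · exact Or.inr (by rw [hp2]; exact Or.inl ⟨c, hc, rfl⟩)
        · rw [Multigraph.Walk.edges, List.mem_cons] at he2
          rcases he2 with rfl | he2
          · refine Or.inl ?_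
            rw [hdropmem, hs2]
            exact ⟨Or.inr (Or.inr ⟨i2, rfl⟩), fun h => Sum.inr_ne_inl h⟩
          · exact Or.inr (by rw [hp2]; exact Or.inr ⟨e2, he2, i2, rfl⟩)
    · intro x hx
      rw [Multigraph.Walk.edges_append, List.mem_append] at hx
      rw [Multigraph.Walk.edges, List.mem_cons]
      rcases hx with hx | hx
      · exact Or.inl ((hs3 x).1 hx)
      · exact Or.inr (hp3 x hx)

lemma ascend {c : V ⊕ (Σ e : E, Fin (n e))} {u : V ⊕ (Σ e : E, Fin (n e))}
    (q : (G.subdivide src tgt hst n).Walk u c) :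
    ∀ (e : E) (j : ℕ), 1 ≤ j → j ≤ n e → u = spos src tgt n e j →
      q.support.Nodup → spos src tgt n e (j - 1) ∉ q.support →
      (∃ bb : V, c = Sum.inl bb) →
      ∃ p : (G.subdivide src tgt hst n).Walk (Sum.inl (tgt e)) c,
        p.support.Sublist q.support ∧ ∀ x ∈ p.edges, x ∈ q.edges := by
  induction q with
  | nil d =>
    intro e j h1 h2 hu _ _ hc
    obtain ⟨bb, rfl⟩ := hc
    rw [spos_mid src tgt n e h1 h2] at hu
    exact absurd hu (by simp)
  | cons x hx q₂ ih =>
    intro e j h1 h2 hu hnd hprev hc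
    rename_i u₀ v₀ c₀
    rw [Multigraph.Walk.support, List.nodup_cons] at hnd
    have humem : u₀ ∈ (G.subdivide src tgt hst n).ends x := by rw [hx]; simp
    have hu' : u₀ = Sum.inr ⟨e, ⟨j - 1, by omega⟩⟩ := by
      rw [hu, spos_mid src tgt n e h1 h2]
    obtain ⟨hx1, hx2⟩ := Multigraph.inr_mem_ends src tgt n hst (hu' ▸ humem)
    obtain ⟨e₁, j₁⟩ := x
    dsimp only at hx1 hx2
    subst e₁
    rw [subdivide_ends src tgt n hst, hu, spos_mid src tgt n e h1 h2, Sym2.eq_iff] at hx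
    rcases hx2 with hj1 | hj1
    · -- the edge goes back down: x = (e, j-1), leading to spos (j-1): contradiction
      exfalso
      have hends : (j₁ : ℕ) = j - 1 := by omega
      rcases hx with ⟨ha, hb⟩ | ⟨ha, hb⟩
      · -- spos (j₁) = inr ⟨e, j-1⟩ = spos j, so j₁ = j, contradiction with j₁ = j-1
        have := spos_inj src tgt n hst e (k := (j₁ : ℕ)) (l := j) (by omega) (by omega)
          (ha.trans (spos_mid src tgt n e h1 h2).symm)
        omega
      · -- v₀ = spos (j₁) = spos (j-1) ∈ q₂.support, contradicting hprev
        apply hprev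
        rw [Multigraph.Walk.support, List.mem_cons]
        refine Or.inr ?_
        have : v₀ = spos src tgt n e (j - 1) := by rw [← ha, hends]
        rw [← this]
        exact q₂.start_mem_support
    · -- the edge goes up: x = (e, j), leading to spos (j+1)
      have hends : (j₁ : ℕ) = j := by omega
      have hv : v₀ = spos src tgt n e (j + 1) := by
        rcases hx with ⟨ha, hb⟩ | ⟨ha, hb⟩
        · rw [← hb, hends]
        · exfalso
          have := spos_inj src tgt n hst e (k := (j₁ : ℕ) + 1) (l := j) (by omega) (by omega)
            (hb.trans (spos_mid src tgt n e h1 h2).symm)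
          omega
      rcases Nat.lt_or_ge j (n e) with hj | hj
      · -- recurse
        obtain ⟨p, hp1, hp2⟩ := ih e (j + 1) (by omega) (by omega) hv hnd.2
          (by
            have harith : j + 1 - 1 = j := by omega
            rw [harith, ← hu]; exact hnd.1) hc
        refine ⟨p, hp1.trans ?_, fun y hy => ?_⟩
        · rw [Multigraph.Walk.support]
          exact List.sublist_cons_self _ _
        · rw [Multigraph.Walk.edges, List.mem_cons]
          exact Or.inr (hp2 y hy)
      · -- exit at the top
        have hje : j = n e := by omega
        have hvtop : v₀ = Sum.inl (tgt e) := by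
          rw [hv, spos_last src tgt n e (by omega)]
        refine ⟨q₂.copy hvtop rfl, ?_, fun y hy => ?_⟩
        · rw [Multigraph.Walk.support_copy, Multigraph.Walk.support]
          exact List.sublist_cons_self _ _
        · rw [Multigraph.Walk.edges_copy] at hy
          rw [Multigraph.Walk.edges, List.mem_cons]
          exact Or.inr hy

lemma descend {c : V ⊕ (Σ e : E, Fin (n e))} {u : V ⊕ (Σ e : E, Fin (n e))}
    (q : (G.subdivide src tgt hst n).Walk u c) :
    ∀ (e : E) (j : ℕ), 1 ≤ j → j ≤ n e → u = spos src tgt n e j →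
      q.support.Nodup → spos src tgt n e (j + 1) ∉ q.support →
      (∃ bb : V, c = Sum.inl bb) →
      ∃ p : (G.subdivide src tgt hst n).Walk (Sum.inl (src e)) c,
        p.support.Sublist q.support ∧ (∀ x ∈ p.edges, x ∈ q.edges) ∧
        (⟨e, ⟨0, Nat.succ_pos _⟩⟩ : Σ e : E, Fin (n e + 1)) ∈ q.edges := by
  induction q with
  | nil d =>
    intro e j h1 h2 hu _ _ hc
    obtain ⟨bb, rfl⟩ := hc
    rw [spos_mid src tgt n e h1 h2] at hu
    exact absurd hu (by simp)
  | cons x hx q₂ ih =>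
    intro e j h1 h2 hu hnd hnext hc
    rename_i u₀ v₀ c₀
    rw [Multigraph.Walk.support, List.nodup_cons] at hnd
    have humem : u₀ ∈ (G.subdivide src tgt hst n).ends x := by rw [hx]; simp
    have hu' : u₀ = Sum.inr ⟨e, ⟨j - 1, by omega⟩⟩ := by
      rw [hu, spos_mid src tgt n e h1 h2]
    obtain ⟨hx1, hx2⟩ := Multigraph.inr_mem_ends src tgt n hst (hu' ▸ humem)
    obtain ⟨e₁, j₁⟩ := x
    dsimp only at hx1 hx2
    subst e₁
    rw [subdivide_ends src tgt n hst, hu, spos_mid src tgt n e h1 h2, Sym2.eq_iff] at hx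
    rcases hx2 with hj1 | hj1
    · -- the edge goes down: x = (e, j-1), leading to spos (j-1)
      have hends : (j₁ : ℕ) = j - 1 := by omega
      have hv : v₀ = spos src tgt n e (j - 1) := by
        rcases hx with ⟨ha, hb⟩ | ⟨ha, hb⟩
        · exfalso
          have := spos_inj src tgt n hst e (k := (j₁ : ℕ)) (l := j) (by omega) (by omega)
            (ha.trans (spos_mid src tgt n e h1 h2).symm)
          omega
        · rw [← ha, hends]
      rcases Nat.lt_or_ge 1 j with hj | hj
      · -- recurse
        obtain ⟨p, hp1, hp2, hp3⟩ := ih e (j - 1) (by omega) (by omega) hv hnd.2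
          (by
            have harith : j - 1 + 1 = j := by omega
            rw [harith, ← hu]; exact hnd.1) hc
        refine ⟨p, hp1.trans ?_, fun y hy => ?_, ?_⟩
        · rw [Multigraph.Walk.support]
          exact List.sublist_cons_self _ _
        · rw [Multigraph.Walk.edges, List.mem_cons]
          exact Or.inr (hp2 y hy)
        · rw [Multigraph.Walk.edges, List.mem_cons]
          exact Or.inr hp3
      · -- exit at the bottom
        have hje : j = 1 := by omega
        have hvbot : v₀ = Sum.inl (src e) := by
          rw [hv, hje]
          exact spos_zero src tgt n e
        refine ⟨q₂.copy hvbot rfl, ?_, fun y hy => ?_, ?_⟩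
        · rw [Multigraph.Walk.support_copy, Multigraph.Walk.support]
          exact List.sublist_cons_self _ _
        · rw [Multigraph.Walk.edges_copy] at hy
          rw [Multigraph.Walk.edges, List.mem_cons]
          exact Or.inr hy
        · rw [Multigraph.Walk.edges, List.mem_cons]
          exact Or.inl (sigma_fin_ext rfl (by show (0 : ℕ) = (j₁ : ℕ); omega))
    · -- the edge goes up: x = (e, j), leading to spos (j+1) ∈ q₂.support: contra
      exfalso
      have hends : (j₁ : ℕ) = j := by omega
      have hv : v₀ = spos src tgt n e (j + 1) := by
        rcases hx with ⟨ha, hb⟩ | ⟨ha, hb⟩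
        · rw [← hb, hends]
        · exfalso
          have := spos_inj src tgt n hst e (k := (j₁ : ℕ) + 1) (l := j) (by omega) (by omega)
            (hb.trans (spos_mid src tgt n e h1 h2).symm)
          omega
      apply hnext
      rw [Multigraph.Walk.support, List.mem_cons]
      exact Or.inr (hv ▸ q₂.start_mem_support)

lemma project : ∀ (k : ℕ) {u c : V ⊕ (Σ e : E, Fin (n e))}
    (p : (G.subdivide src tgt hst n).Walk u c) {a b : V},
    u = Sum.inl a → c = Sum.inl b → p.support.length ≤ k → p.support.Nodup →
    ∃ q : G.Walk a b, (q.support.map Sum.inl).Sublist p.support ∧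
      ∀ e' ∈ q.edges, (⟨e', ⟨0, Nat.succ_pos _⟩⟩ : Σ e : E, Fin (n e + 1)) ∈ p.edges := by
  intro k
  induction k with
  | zero =>
    intro u c p a b hu hc hlen _
    rw [support_eq_cons' p] at hlen
    simp at hlen
  | succ k ih =>
    intro u c p a b hu hc hlen hnd
    cases p with
    | nil =>
      subst hu
      obtain rfl : a = b := Sum.inl.inj hc
      exact ⟨.nil a, by simp [Multigraph.Walk.support], by simp [Multigraph.Walk.edges]⟩
    | cons x hx p' =>
      rename_i v₀
      subst hu
      have hlen' : p'.support.length ≤ k := by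
        rw [Multigraph.Walk.support, List.length_cons] at hlen
        omega
      have hnd' : (Sum.inl a : V ⊕ (Σ e : E, Fin (n e))) ∉ p'.support ∧ p'.support.Nodup := by
        rw [Multigraph.Walk.support, List.nodup_cons] at hnd
        exact hnd
      have humem : (Sum.inl a : V ⊕ (Σ e : E, Fin (n e))) ∈
          (G.subdivide src tgt hst n).ends x := by rw [hx]; simp
      obtain ⟨e, j⟩ := x
      have hj := j.isLt
      have hx2 := hx
      rw [subdivide_ends src tgt n hst, Sym2.eq_iff] at hx2
      have hbex : ∃ bb : V, c = Sum.inl bb := ⟨b, hc⟩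
      have hhead : (⟨e, ⟨0, Nat.succ_pos _⟩⟩ : Σ e : E, Fin (n e + 1)) = ⟨e, j⟩ →
          (⟨e, ⟨0, Nat.succ_pos _⟩⟩ : Σ e : E, Fin (n e + 1)) ∈
            (Multigraph.Walk.cons ⟨e, j⟩ hx p').edges := by
        intro h
        rw [Multigraph.Walk.edges, List.mem_cons]
        exact Or.inl h
      rcases Multigraph.inl_mem_ends src tgt n hst humem with ⟨hj0, ha⟩ | ⟨hjn, ha⟩
      · -- a = src e, edge index 0
        dsimp only at hj0 ha
        have hinla : Sum.inl a = spos src tgt n e 0 := by rw [spos_zero, ha]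
        have hv : v₀ = spos src tgt n e 1 := by
          rcases hx2 with ⟨ha', hb'⟩ | ⟨ha', hb'⟩
          · rw [← hb', hj0]
          · exfalso
            have := spos_inj src tgt n hst e (k := (j : ℕ) + 1) (l := 0)
              (by omega) (by omega) (hb'.trans hinla)
            omega
        have hGends : G.ends e = s(a, tgt e) := by rw [hst e, ha]
        rcases Nat.eq_zero_or_pos (n e) with hne | hne
        · -- no subdivision vertices: v₀ = inl (tgt e)
          have hvtop : v₀ = Sum.inl (tgt e) := by
            rw [hv, spos_last src tgt n e (by omega)]
          obtain ⟨q', hq1, hq2⟩ := ih p' hvtop hc hlen' hnd'.2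
          refine ⟨.cons e hGends q', ?_, ?_⟩
          · rw [Multigraph.Walk.support, Multigraph.Walk.support, List.map_cons]
            exact List.cons_sublist_cons.mpr hq1
          · intro e' he'
            rw [Multigraph.Walk.edges, List.mem_cons] at he'
            rcases he' with rfl | he'
            · exact hhead (sigma_fin_ext rfl (by show (0 : ℕ) = (j : ℕ); omega))
            · rw [Multigraph.Walk.edges, List.mem_cons]
              exact Or.inr (hq2 e' he')
        · -- ascend through the subdivision vertices
          obtain ⟨w, hw1, hw2⟩ := ascend p' e 1 le_rfl hne hv hnd'.2
            (by rw [← hinla]; exact hnd'.1) hbex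
          obtain ⟨q', hq1, hq2⟩ := ih w rfl hc (hw1.length_le.trans hlen')
            (hnd'.2.sublist hw1)
          refine ⟨.cons e hGends q', ?_, ?_⟩
          · rw [Multigraph.Walk.support, Multigraph.Walk.support, List.map_cons]
            exact List.cons_sublist_cons.mpr (hq1.trans hw1)
          · intro e' he'
            rw [Multigraph.Walk.edges, List.mem_cons] at he'
            rcases he' with rfl | he'
            · exact hhead (sigma_fin_ext rfl (by show (0 : ℕ) = (j : ℕ); omega))
            · rw [Multigraph.Walk.edges, List.mem_cons]
              exact Or.inr (hw2 _ (hq2 e' he'))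
      · -- a = tgt e, edge index n e
        dsimp only at hjn ha
        have hinla : Sum.inl a = spos src tgt n e (n e + 1) := by
          rw [spos_last src tgt n e (by omega), ha]
        have hv : v₀ = spos src tgt n e (n e) := by
          rcases hx2 with ⟨ha', hb'⟩ | ⟨ha', hb'⟩
          · exfalso
            have := spos_inj src tgt n hst e (k := (j : ℕ)) (l := n e + 1)
              (by omega) (by omega) (ha'.trans hinla)
            omega
          · rw [← ha', hjn]
        have hGends : G.ends e = s(a, src e) := by rw [hst e, ha, Sym2.eq_swap]
        rcases Nat.eq_zero_or_pos (n e) with hne | hne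
        · -- no subdivision vertices: v₀ = inl (src e)
          have hvbot : v₀ = Sum.inl (src e) := by
            rw [hv, hne, spos_zero]
          obtain ⟨q', hq1, hq2⟩ := ih p' hvbot hc hlen' hnd'.2
          refine ⟨.cons e hGends q', ?_, ?_⟩
          · rw [Multigraph.Walk.support, Multigraph.Walk.support, List.map_cons]
            exact List.cons_sublist_cons.mpr hq1
          · intro e' he'
            rw [Multigraph.Walk.edges, List.mem_cons] at he'
            rcases he' with rfl | he'
            · exact hhead (sigma_fin_ext rfl (by show (0 : ℕ) = (j : ℕ); omega))
            · rw [Multigraph.Walk.edges, List.mem_cons]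
              exact Or.inr (hq2 e' he')
        · -- descend through the subdivision vertices
          obtain ⟨w, hw1, hw2, hw3⟩ := descend p' e (n e) hne le_rfl hv hnd'.2
            (by rw [← hinla]; exact hnd'.1) hbex
          obtain ⟨q', hq1, hq2⟩ := ih w rfl hc (hw1.length_le.trans hlen')
            (hnd'.2.sublist hw1)
          refine ⟨.cons e hGends q', ?_, ?_⟩
          · rw [Multigraph.Walk.support, Multigraph.Walk.support, List.map_cons]
            exact List.cons_sublist_cons.mpr (hq1.trans hw1)
          · intro e' he'
            rw [Multigraph.Walk.edges, List.mem_cons] at he'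
            rcases he' with rfl | he'
            · rw [Multigraph.Walk.edges, List.mem_cons]
              exact Or.inr hw3
            · rw [Multigraph.Walk.edges, List.mem_cons]
              exact Or.inr (hw2 _ (hq2 e' he'))

end Multigraph

end MainAux

/-- If every vertex of a connected `H` has multidegree at least `3` and `G'`
is a subdivision of `G`, then no branch vertex of an `H`-immersion model in `G'` is a
subdivision vertex, and `G'` contains `H` as an immersion iff `G` does. -/
theorem subdivision_immersion {V1 E1 V E : Type} [Fintype E1]
    (H : Multigraph V1 E1) (G : Multigraph V E)
    (hc : H.Connected) (hdeg : ∀ x, 3 ≤ H.mdeg x)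
    (src tgt : E → V) (hst : ∀ e, G.ends e = s(src e, tgt e)) (n : E → ℕ) :
    (∀ (m : Multigraph.ImmersionModel H (G.subdivide src tgt hst n)) (x : V1),
      ∃ a : V, m.vmap x = Sum.inl a) ∧
    (Multigraph.Immersed H (G.subdivide src tgt hst n) ↔ Multigraph.Immersed H G) := by
  refine ⟨fun m x => Multigraph.branch_inl H hdeg m x, ?_, ?_⟩
  · rintro ⟨m⟩
    have hA : ∀ x, ∃ a : V, m.vmap x = Sum.inl a :=
      fun x => Multigraph.branch_inl H hdeg m x
    have hA2 : ∀ x, m.vmap x = Sum.inl ((hA x).choose) := fun x => (hA x).choose_spec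
    have hproj : ∀ f : E1, ∃ q : G.Walk ((hA (m.src f)).choose) ((hA (m.tgt f)).choose),
        (q.support.map Sum.inl).Sublist (m.path f).support ∧
        ∀ e' ∈ q.edges,
          (⟨e', ⟨0, Nat.succ_pos _⟩⟩ : Σ e : E, Fin (n e + 1)) ∈ (m.path f).edges :=
      fun f => Multigraph.project (m.path f).support.length (m.path f)
        (hA2 _) (hA2 _) le_rfl (m.path_isPath f)
    refine ⟨{
      vmap := fun x => (hA x).choose
      vmap_inj := fun x y h => m.vmap_inj (by rw [hA2 x, hA2 y]; exact congrArg Sum.inl h)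
      src := m.src
      tgt := m.tgt
      ends_eq := m.ends_eq
      path := fun f => (hproj f).choose
      path_isPath := fun f =>
        List.Nodup.of_map _ (((hproj f).choose_spec.1).nodup (m.path_isPath f))
      edge_disjoint := fun f1 f2 hne y hy1 hy2 =>
        m.edge_disjoint f1 f2 hne _ ((hproj f1).choose_spec.2 y hy1)
          ((hproj f2).choose_spec.2 y hy2) }⟩
  · rintro ⟨m⟩
    have hlift : ∀ f : E1,
        ∃ p : (G.subdivide src tgt hst n).Walk
          (Sum.inl (m.vmap (m.src f))) (Sum.inl (m.vmap (m.tgt f))),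
        p.support.Nodup ∧
        (∀ w, w ∈ p.support ↔ (∃ c ∈ (m.path f).support, w = Sum.inl c) ∨
          ∃ e ∈ (m.path f).edges, ∃ i : Fin (n e), w = Sum.inr ⟨e, i⟩) ∧
        (∀ x : Σ e : E, Fin (n e + 1), x ∈ p.edges → x.1 ∈ (m.path f).edges) :=
      fun f => Multigraph.lift_walk (m.path f) (m.path_isPath f)
    refine ⟨{
      vmap := fun x => Sum.inl (m.vmap x)
      vmap_inj := fun x y h => m.vmap_inj (Sum.inl.inj h)
      src := m.src
      tgt := m.tgt
      ends_eq := m.ends_eq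
      path := fun f => (hlift f).choose
      path_isPath := fun f => (hlift f).choose_spec.1
      edge_disjoint := fun f1 f2 hne y hy1 hy2 =>
        m.edge_disjoint f1 f2 hne y.1 ((hlift f1).choose_spec.2.2 y hy1)
          ((hlift f2).choose_spec.2.2 y hy2) }⟩
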